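/- (0_S-reduction of an S-expanded multialgebra.) Let S be a finite commutative semigroup possessing an absorbing (zero) element z, i.e. z·s = z for all s ∈ S, and let C : (Fin n → ι) → ι → k be totally antisymmetric structure constants satisfying the generalized Jacobi identity. Define reduced structure constants on the index set ι × {s : S // s ≠ z} by C̃ ((A₁,α₁),…,(Aₙ,αₙ)) (t,γ) = C (A₁,…,Aₙ) t if α₁·⋯·αₙ = γ in S, and 0 otherwise. Then C̃ is totally antisymmetric under simultaneous permutation (with sign) of its n lower index pairs and satisfies the generalized Jacobi identity on ι × {s : S // s ≠ z} (with the intermediate summation index ranging over this set); hence the 0_S-reduced S-expanded multialgebra 𝔊_R is a higher-order Lie algebra of order n. -/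
import Mathlib


open scoped Classical

noncomputable section

/-- Total antisymmetry of structure constants. -/
def IsTotallyAntisymmetric {k ι : Type*} [CommRing k] {n : ℕ}
    (C : (Fin n → ι) → ι → k) : Prop :=
  ∀ (σ : Equiv.Perm (Fin n)) (i : Fin n → ι) (t : ι),
    C (i ∘ σ) t = (Equiv.Perm.sign σ : ℤ) • C i t

/-- The generalized Jacobi identity. -/
def SatisfiesGJI {k ι : Type*} [CommRing k] [Fintype ι] {n : ℕ}
    (C : (Fin n → ι) → ι → k) : Prop :=
  ∀ (j : Fin (2 * n - 1) → ι) (t : ι),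
    (∑ σ : Equiv.Perm (Fin (2 * n - 1)),
      (Equiv.Perm.sign σ : ℤ) •
        ∑ ρ : ι,
          C (fun l : Fin n => j (σ ⟨(l : ℕ), lt_of_lt_of_le l.isLt (by omega)⟩)) ρ *
          C (fun l : Fin n =>
              if hl : (l : ℕ) = 0 then ρ
              else j (σ ⟨n + (l : ℕ) - 1, by have := l.isLt; omega⟩)) t) = 0

/-- The product `α₁·α₂·⋯·αₙ` of a family of semigroup elements, computed in the
monoid `WithOne S` (for `n ≥ 1` it is the genuine semigroup product, coerced). -/
def wprod {S : Type*} [CommSemigroup S] {n : ℕ} (f : Fin n → S) : WithOne S :=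
  ∏ l, (f l : WithOne S)

/-- The `0_S`-reduced `S`-expanded structure constants on `ι × {s : S // s ≠ z}`:
`C̃ ((A₁,α₁),…,(Aₙ,αₙ)) (t,γ) = C (A₁,…,Aₙ) t` if `α₁·⋯·αₙ = γ` in `S`, else `0`. -/
def reducedSExpandedC {k ι S : Type*} [CommRing k] [CommSemigroup S] (z : S) {n : ℕ}
    (C : (Fin n → ι) → ι → k) :
    (Fin n → ι × {s : S // s ≠ z}) → (ι × {s : S // s ≠ z}) → k :=
  fun A t =>
    if wprod (fun l => ((A l).2 : S)) = (((t.2 : S) : S) : WithOne S)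
    then C (fun l => (A l).1) t.1 else 0

lemma wprod_exists {S : Type*} [CommSemigroup S] {m : ℕ} (f : Fin (m+1) → S) :
    ∃ a : S, wprod f = (a : WithOne S) := by
  induction m with
  | zero => exact ⟨f 0, by simp [wprod]⟩
  | succ m ih =>
      obtain ⟨a, ha⟩ := ih (fun l => f l.succ)
      refine ⟨f 0 * a, ?_⟩
      rw [wprod, Fin.prod_univ_succ, show (∏ l : Fin (m+1), ((f l.succ : S) : WithOne S)) = wprod (fun l => f l.succ) from rfl, ha]
      simp

lemma sum_sub_ite {k S : Type*} [CommRing k] [Fintype S] [CommSemigroup S] (z : S)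
    (hz : ∀ s : S, z * s = z) (a b : S) (γ : {s : S // s ≠ z}) (X Y : k) :
    (∑ ρ₂ : {s : S // s ≠ z},
      (if (a : WithOne S) = ((ρ₂ : S) : WithOne S) then X else 0) *
      (if ((ρ₂ : S) : WithOne S) * (b : WithOne S) = ((γ : S) : WithOne S) then Y else 0))
    = if (a : WithOne S) * (b : WithOne S) = ((γ : S) : WithOne S) then X * Y else 0 := by
  by_cases haz : a = z
  · subst haz
    rw [Finset.sum_eq_zero, if_neg]
    · rw [← WithOne.coe_mul, hz b]
      intro h
      exact γ.2 (WithOne.coe_inj.mp h).symm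
    · intro ρ₂ _
      rw [if_neg, zero_mul]
      intro h
      exact ρ₂.2 (WithOne.coe_inj.mp h).symm
  · rw [Finset.sum_eq_single (⟨a, haz⟩ : {s : S // s ≠ z})]
    · simp [mul_ite]
    · intro ρ₂ _ hne
      rw [if_neg, zero_mul]
      intro h
      exact hne (Subtype.ext (WithOne.coe_inj.mp h).symm)
    · intro h; exact absurd (Finset.mem_univ _) h

lemma prod_split {M : Type*} [CommMonoid M] (m : ℕ) (g : Fin (2*(m+2)-1) → M) :
    ∏ w, g w =
      (∏ l : Fin (m+2), g ⟨(l : ℕ), by omega⟩) *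
      ∏ l : Fin (m+1), g ⟨(m+2) + (l : ℕ), by omega⟩ := by
  have h : (m+2) + (m+1) = 2*(m+2)-1 := by omega
  rw [← Equiv.prod_comp (finCongr h) g, Fin.prod_univ_add]
  rfl


/-- (0_S-reduction of an S-expanded multialgebra.) If `S` is a finite abelian
semigroup with an absorbing element `z` and `C` are totally antisymmetric structure
constants satisfying the generalized Jacobi identity, then the reduced structure
constants are totally antisymmetric and satisfy the generalized Jacobi identity on
`ι × {s : S // s ≠ z}`; hence the `0_S`-reduced `S`-expanded multialgebra `𝔊_R` is a
higher-order Lie algebra of order `n`. -/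
theorem reducedSExpandedC_isMultialgebra {k ι S : Type*} [CommRing k] [Fintype ι]
    [CommSemigroup S] [Fintype S] {n : ℕ} (hn : 2 ≤ n)
    (z : S) (hz : ∀ s : S, z * s = z)
    (C : (Fin n → ι) → ι → k)
    (hA : IsTotallyAntisymmetric C) (hJ : SatisfiesGJI C) :
    IsTotallyAntisymmetric (reducedSExpandedC z C) ∧
    SatisfiesGJI (reducedSExpandedC z C) := by
  obtain ⟨m, rfl⟩ : ∃ m, n = m + 2 := ⟨n - 2, by omega⟩
  constructor
  · intro σ i t
    simp only [reducedSExpandedC, Function.comp]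
    rw [show (wprod fun l => (((i (σ l)).2 : S) : S)) = wprod fun l => (((i l).2 : S) : S) from
      Equiv.prod_comp σ fun l => ((((i l).2 : S) : S) : WithOne S)]
    split_ifs with h
    · exact hA σ (fun l => (i l).1) t.1
    · simp
  · intro j t
    have hterm : ∀ σ : Equiv.Perm (Fin (2*(m+2)-1)),
        (∑ ρ : ι × {s : S // s ≠ z},
          reducedSExpandedC z C
            (fun l : Fin (m+2) => j (σ ⟨(l : ℕ), lt_of_lt_of_le l.isLt (by omega)⟩)) ρ *
          reducedSExpandedC z C
            (fun l : Fin (m+2) =>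
              if hl : (l : ℕ) = 0 then ρ
              else j (σ ⟨(m+2) + (l : ℕ) - 1, by have := l.isLt; omega⟩)) t)
        = if (∏ w, (((j w).2 : S) : WithOne S)) = (((t.2 : S) : S) : WithOne S)
          then ∑ ρ₁ : ι,
            C (fun l : Fin (m+2) => (j (σ ⟨(l : ℕ), lt_of_lt_of_le l.isLt (by omega)⟩)).1) ρ₁ *
            C (fun l : Fin (m+2) =>
                if hl : (l : ℕ) = 0 then ρ₁
                else (j (σ ⟨(m+2) + (l : ℕ) - 1, by have := l.isLt; omega⟩)).1) t.1
          else 0 := by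
      intro σ
      obtain ⟨a, ha⟩ := wprod_exists
        (fun l : Fin (m+2) => ((j (σ ⟨(l : ℕ), lt_of_lt_of_le l.isLt (by omega)⟩)).2 : S))
      obtain ⟨b, hb⟩ := wprod_exists
        (fun l : Fin (m+1) => ((j (σ ⟨(m+2) + (l : ℕ), by omega⟩)).2 : S))
      have hT : (∏ w, (((j w).2 : S) : WithOne S))
          = (a : WithOne S) * (b : WithOne S) := by
        rw [← Equiv.prod_comp σ (fun w => (((j w).2 : S) : WithOne S)),
          prod_split m (fun w => (((j (σ w)).2 : S) : WithOne S)), ← ha, ← hb]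
        rfl
      have hsecond : ∀ ρ : ι × {s : S // s ≠ z},
          wprod (fun l : Fin (m+2) =>
            (((if hl : (l : ℕ) = 0 then ρ
              else j (σ ⟨(m+2) + (l : ℕ) - 1, by have := l.isLt; omega⟩)).2 : S) : S))
          = ((ρ.2 : S) : WithOne S) * (b : WithOne S) := by
        intro ρ
        rw [wprod, Fin.prod_univ_succ, ← hb, wprod]
        congr 1
      rw [Fintype.sum_prod_type, hT]
      rw [show (if ((a : WithOne S) * b = ((t.2 : S) : WithOne S)) then
          (∑ ρ₁ : ι,
            C (fun l : Fin (m+2) => (j (σ ⟨(l : ℕ), lt_of_lt_of_le l.isLt (by omega)⟩)).1) ρ₁ *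
            C (fun l : Fin (m+2) =>
                if hl : (l : ℕ) = 0 then ρ₁
                else (j (σ ⟨(m+2) + (l : ℕ) - 1, by have := l.isLt; omega⟩)).1) t.1)
          else 0)
        = ∑ ρ₁ : ι, (if ((a : WithOne S) * b = ((t.2 : S) : WithOne S)) then
            C (fun l : Fin (m+2) => (j (σ ⟨(l : ℕ), lt_of_lt_of_le l.isLt (by omega)⟩)).1) ρ₁ *
            C (fun l : Fin (m+2) =>
                if hl : (l : ℕ) = 0 then ρ₁
                else (j (σ ⟨(m+2) + (l : ℕ) - 1, by have := l.isLt; omega⟩)).1) t.1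
          else 0) from by split_ifs <;> simp]
      refine Finset.sum_congr rfl fun x _ => ?_
      rw [← sum_sub_ite z hz a b t.2
        (C (fun l : Fin (m+2) => (j (σ ⟨(l : ℕ), lt_of_lt_of_le l.isLt (by omega)⟩)).1) x)
        (C (fun l : Fin (m+2) =>
          if hl : (l : ℕ) = 0 then x
          else (j (σ ⟨(m+2) + (l : ℕ) - 1, by have := l.isLt; omega⟩)).1) t.1)]
      refine Finset.sum_congr rfl fun y _ => ?_
      congr 1
      · simp only [reducedSExpandedC]
        rw [ha]
      · simp only [reducedSExpandedC]
        rw [hsecond (x, y)]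
        congr 1
        simp only [apply_dite Prod.fst]
    calc (∑ σ : Equiv.Perm (Fin (2 * (m+2) - 1)),
          (Equiv.Perm.sign σ : ℤ) •
            ∑ ρ : ι × {s : S // s ≠ z},
              reducedSExpandedC z C
                (fun l : Fin (m+2) => j (σ ⟨(l : ℕ), lt_of_lt_of_le l.isLt (by omega)⟩)) ρ *
              reducedSExpandedC z C
                (fun l : Fin (m+2) =>
                  if hl : (l : ℕ) = 0 then ρ
                  else j (σ ⟨(m+2) + (l : ℕ) - 1, by have := l.isLt; omega⟩)) t)
        = ∑ σ : Equiv.Perm (Fin (2 * (m+2) - 1)),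
          (Equiv.Perm.sign σ : ℤ) •
            (if (∏ w, (((j w).2 : S) : WithOne S)) = (((t.2 : S) : S) : WithOne S)
            then ∑ ρ₁ : ι,
              C (fun l : Fin (m+2) => (j (σ ⟨(l : ℕ), lt_of_lt_of_le l.isLt (by omega)⟩)).1) ρ₁ *
              C (fun l : Fin (m+2) =>
                  if hl : (l : ℕ) = 0 then ρ₁
                  else (j (σ ⟨(m+2) + (l : ℕ) - 1, by have := l.isLt; omega⟩)).1) t.1
            else 0) := Finset.sum_congr rfl fun σ _ => by rw [hterm σ]
      _ = 0 := by
        by_cases hc : (∏ w, (((j w).2 : S) : WithOne S)) = (((t.2 : S) : S) : WithOne S)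
        · simp only [if_pos hc]
          exact hJ (fun w => (j w).1) t.1
        · simp only [if_neg hc, smul_zero, Finset.sum_const_zero]
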